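/- arXiv:1207.1597 — 7 statements merged into one kernel-verified Lean document; each statement's English description precedes it below -/
import Mathlib

section
/- The kernel of the homomorphism φ : H_n → ℤⁿ (sending h to its eventual translation vector) is exactly the group of finitely supported permutations of S = ℕ × {1,…,n}. -/
/-- `h` is eventually the translation given by the integer vector `m`:
for each ray `x`, `h (i, x) = (i + m x, x)` for all `i ≥ z x`. -/
def EvTransW (n : ℕ) (h : ℕ × Fin n → ℕ × Fin n) (m : Fin n → ℤ) : Prop :=
  ∃ z : Fin n → ℕ, ∀ (x : Fin n) (i : ℕ), z x ≤ i →
    ((h (i, x)).1 : ℤ) = (i : ℤ) + m x ∧ (h (i, x)).2 = x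

/-- `h` is eventually a translation. -/
def EvTrans (n : ℕ) (h : ℕ × Fin n → ℕ × Fin n) : Prop :=
  ∃ m : Fin n → ℤ, EvTransW n h m

/-- An element of Houghton's group lies in the kernel of `φ` (i.e. is eventually
the zero translation) if and only if it has finite support. -/
theorem stmt_5 (n : ℕ) (h : Equiv.Perm (ℕ × Fin n)) (hh : EvTrans n ⇑h) :
    EvTransW n ⇑h (fun _ => (0 : ℤ)) ↔ {s : ℕ × Fin n | h s ≠ s}.Finite := by
  constructor
  · rintro ⟨z, hz⟩
    set N := Finset.univ.sup z with hN
    apply Set.Finite.subset ((Set.finite_Iio N).prod Set.finite_univ)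
    rintro ⟨i, x⟩ hs
    by_contra hlt
    simp only [Set.mem_prod, Set.mem_Iio, Set.mem_univ, and_true, not_lt] at hlt
    have hzx : z x ≤ i := le_trans (Finset.le_sup (Finset.mem_univ x)) hlt
    obtain ⟨h1, h2⟩ := hz x i hzx
    apply hs
    have : ((h (i, x)).1 : ℤ) = (i : ℤ) := by simpa using h1
    exact Prod.ext (by exact_mod_cast this) h2
  · intro hf
    refine ⟨fun _ => hf.toFinset.sup (fun s => s.1 + 1), fun x i hi => ?_⟩
    have : h (i, x) = (i, x) := by
      by_contra hne
      have hmem : (i, x) ∈ hf.toFinset := by simpa using hne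
      have := Finset.le_sup (f := fun s : ℕ × Fin n => s.1 + 1) hmem
      dsimp only at this hi
      omega
    rw [this]
    simp
end

section
/- Every element of finite order in Houghton's group H_n has finite support, i.e., the set of points of S not fixed by the element is finite. -/
/-- Every element of finite order in Houghton's group has finite support. -/
theorem stmt_6 (n : ℕ) (h : Equiv.Perm (ℕ × Fin n)) (hh : EvTrans n ⇑h)
    (hfin : IsOfFinOrder h) :
    {s : ℕ × Fin n | h s ≠ s}.Finite := by
  obtain ⟨m, z, hz⟩ := hh
  set k := orderOf h with hkdef
  have hkpos : 0 < k := hfin.orderOf_pos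
  have hpow : h ^ k = 1 := pow_orderOf_eq_one h
  -- the translation vector must be zero
  have hm0 : ∀ x, m x = 0 := by
    intro x
    by_contra hx
    set i := z x + k * (m x).natAbs with hi
    have key : ∀ j, j ≤ k → ∃ N : ℕ, (h ^ j) (i, x) = (N, x) ∧
        (N : ℤ) = (i : ℤ) + j * m x ∧ z x ≤ N := by
      intro j hj
      induction j with
      | zero => exact ⟨i, by simp, by simp, by omega⟩
      | succ j ih =>
        obtain ⟨N, hN1, hN2, hN3⟩ := ih (Nat.le_of_succ_le hj)
        obtain ⟨hA, hB⟩ := hz x N hN3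
        refine ⟨(h (N, x)).1, ?_, ?_, ?_⟩
        · rw [pow_succ', Equiv.Perm.mul_apply, hN1]
          exact Prod.ext rfl hB
        · push_cast
          rw [hA, hN2]; ring
        · -- z x ≤ (h (N,x)).1, since its cast is i + (j+1) m x
          have habs : (j + 1 : ℤ) * |m x| ≤ (k : ℤ) * |m x| := by
            apply mul_le_mul_of_nonneg_right _ (abs_nonneg _)
            exact_mod_cast hj
          have h1 : ((h (N, x)).1 : ℤ) = (i : ℤ) + (j + 1) * m x := by
            rw [hA, hN2]; ring
          have h2 : (i : ℤ) = (z x : ℤ) + (k : ℤ) * |m x| := by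
            have hcast : ((m x).natAbs : ℤ) = |m x| := (Int.abs_eq_natAbs _).symm
            rw [hi]; push_cast [hcast]; ring
          have h3 : (j + 1 : ℤ) * m x ≥ -((j + 1 : ℤ) * |m x|) := by
            have := neg_abs_le (m x)
            nlinarith [abs_nonneg (m x)]
          have : ((h (N, x)).1 : ℤ) ≥ (z x : ℤ) := by
            rw [h1, h2]; linarith
          exact_mod_cast this
    obtain ⟨N, hN1, hN2, _⟩ := key k le_rfl
    rw [hpow, Equiv.Perm.one_apply] at hN1
    have : N = i := (congrArg Prod.fst hN1).symm
    rw [this] at hN2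
    have : (k : ℤ) * m x = 0 := by linarith
    rcases mul_eq_zero.mp this with h' | h'
    · exact absurd h' (by exact_mod_cast hkpos.ne')
    · exact hx h'
  --支持集 ⊆ finite set
  classical
  set Z := Finset.univ.sup z with hZ
  apply Set.Finite.subset ((Finset.range Z ×ˢ (Finset.univ : Finset (Fin n))).finite_toSet)
  rintro ⟨i, x⟩ hs
  simp only [Finset.coe_product, Set.mem_prod, Finset.coe_range, Set.mem_Iio,
    Finset.coe_univ, Set.mem_univ, and_true]
  by_contra hiZ
  push_neg at hiZ
  have hle : z x ≤ i := le_trans (Finset.le_sup (Finset.mem_univ x)) hiZ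
  obtain ⟨hA, hB⟩ := hz x i hle
  rw [hm0 x, add_zero] at hA
  exact hs (Prod.ext (by exact_mod_cast hA) hB)
end

section
/- Every finite subgroup Q of Houghton's group H_n has finite support: the set S_Q = {s ∈ S : q·s ≠ s for some q ∈ Q} is finite. -/
lemma aux_m_zero (n k : ℕ) (q : Equiv.Perm (ℕ × Fin n)) (m : Fin n → ℤ)
    (z : Fin n → ℕ)
    (hz : ∀ (x : Fin n) (i : ℕ), z x ≤ i →
      ((q (i, x)).1 : ℤ) = (i : ℤ) + m x ∧ (q (i, x)).2 = x)
    (hk : q ^ k = 1) (hkpos : 0 < k) (x : Fin n) : m x = 0 := by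
  set i₀ : ℕ := z x + k * (m x).natAbs with hi₀
  have habs : ((m x).natAbs : ℤ) = |m x| := Int.natCast_natAbs _
  have key : ∀ j ≤ k, ((q ^ j) (i₀, x)).1 = ((i₀ : ℤ) + j * m x).toNat ∧
      ((q ^ j) (i₀, x)).2 = x ∧ (z x : ℤ) ≤ (i₀ : ℤ) + j * m x := by
    intro j hj
    induction j with
    | zero =>
      simp only [pow_zero, Equiv.Perm.coe_one, id_eq, Nat.cast_zero, zero_mul, add_zero]
      exact ⟨(Int.toNat_natCast _).symm, trivial, by exact_mod_cast Nat.le_add_right (z x) _⟩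
    | succ j ih =>
      obtain ⟨h1, h2, h3⟩ := ih (Nat.le_of_succ_le hj)
      have hjk : (j : ℤ) + 1 ≤ (k : ℤ) := by exact_mod_cast hj
      have hbnd : (z x : ℤ) ≤ (i₀ : ℤ) + (j + 1) * m x := by
        have h1' : -|m x| ≤ m x := neg_abs_le (m x)
        have h2' : m x ≤ |m x| := le_abs_self (m x)
        have : (i₀ : ℤ) = (z x : ℤ) + (k : ℤ) * |m x| := by
          push_cast [hi₀, habs]; ring
        nlinarith [abs_nonneg (m x)]
      set N : ℕ := ((i₀ : ℤ) + j * m x).toNat with hN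
      have hNz : z x ≤ N := by omega
      obtain ⟨hq1, hq2⟩ := hz x N hNz
      have hstep : (q ^ (j + 1)) (i₀, x) = q ((q ^ j) (i₀, x)) := by
        rw [pow_succ', Equiv.Perm.mul_apply]
      have hpt : (q ^ j) (i₀, x) = (N, x) := Prod.ext h1 h2
      rw [hstep, hpt]
      have hNval : (N : ℤ) = (i₀ : ℤ) + j * m x := by omega
      refine ⟨?_, hq2, hbnd⟩
      have heq : ((q (N, x)).1 : ℤ) = (i₀ : ℤ) + ((j : ℤ) + 1) * m x := by
        rw [hq1, hNval]; ring
      have hnn : (0:ℤ) ≤ (i₀ : ℤ) + ((j : ℤ) + 1) * m x := by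
        push_cast at hbnd; exact le_trans (Int.natCast_nonneg _) hbnd
      push_cast at heq hnn ⊢
      omega
  obtain ⟨h1, _, h3⟩ := key k le_rfl
  rw [hk] at h1
  simp only [Equiv.Perm.coe_one, id_eq] at h1
  have : (k : ℤ) * m x = 0 := by omega
  have hk0 : (k : ℤ) ≠ 0 := by exact_mod_cast hkpos.ne'
  exact (mul_eq_zero.mp this).resolve_left hk0

/-- Every finite subgroup of Houghton's group has finite support. -/
theorem stmt_7 (n : ℕ) (Q : Subgroup (Equiv.Perm (ℕ × Fin n)))
    (hQ : ∀ q ∈ Q, EvTrans n ⇑q) (hfin : Finite Q) :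
    {s : ℕ × Fin n | ∃ q ∈ Q, q s ≠ s}.Finite := by
  have hsub : {s : ℕ × Fin n | ∃ q ∈ Q, q s ≠ s} ⊆
      ⋃ q : Q, {s : ℕ × Fin n | (q : Equiv.Perm (ℕ × Fin n)) s ≠ s} := by
    rintro s ⟨q, hq, hs⟩
    exact Set.mem_iUnion.2 ⟨⟨q, hq⟩, hs⟩
  refine Set.Finite.subset (Set.finite_iUnion fun q => ?_) hsub
  obtain ⟨m, z, hz⟩ := hQ q q.2
  have hkpos : 0 < orderOf q := orderOf_pos q
  have hk : (q : Equiv.Perm (ℕ × Fin n)) ^ orderOf q = 1 := by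
    have := pow_orderOf_eq_one q
    exact_mod_cast congrArg (Subtype.val) this
  have hm0 : ∀ x, m x = 0 := aux_m_zero n (orderOf q) q m z hz hk hkpos
  have hfix : ∀ p : ℕ × Fin n, z p.2 ≤ p.1 → (q : Equiv.Perm (ℕ × Fin n)) p = p := by
    rintro ⟨i, x⟩ hp
    obtain ⟨h1, h2⟩ := hz x i hp
    rw [hm0 x, add_zero] at h1
    exact Prod.ext (by exact_mod_cast h1) h2
  refine Set.Finite.subset (((Set.finite_Iio (Finset.univ.sup z + 1)).prod Set.finite_univ)) ?_
  intro p hp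
  refine ⟨?_, trivial⟩
  simp only [Set.mem_Iio]
  by_contra hle
  push_neg at hle
  have : z p.2 ≤ p.1 := le_trans (Finset.le_sup (Finset.mem_univ p.2)) (by omega)
  exact hp (hfix p this)
end

section
/- Let G act faithfully on a set X, let H ≤ G, and partition X into classes X₁,…,X_t according to H-conjugacy classes of H-stabilisers. Suppose that for every g ∈ G and every index a there exists g_a ∈ G acting as g on X_a and fixing X ∖ X_a pointwise. Then the centraliser C_G(H) is isomorphic to the direct product C₁ × ⋯ × C_t, where C_a is the subgroup of C_G(H) fixing X ∖ X_a pointwise. -/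
/-- The subgroup of elements of `G` fixing the set `A ⊆ X` pointwise. -/
def fixingSub (G : Type*) {X : Type*} [Group G] [MulAction G X] (A : Set X) :
    Subgroup G where
  carrier := {g : G | ∀ x ∈ A, g • x = x}
  one_mem' := fun x _ => one_smul G x
  mul_mem' := by
    intro a b ha hb x hx
    rw [mul_smul, hb x hx, ha x hx]
  inv_mem' := by
    intro a ha x hx
    exact inv_smul_eq_iff.mpr (ha x hx).symm

/-- The stabiliser of `x` in the subgroup `H`. -/
def stabInH {G X : Type*} [Group G] [MulAction G X] (H : Subgroup G) (x : X) :
    Subgroup H :=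
  MulAction.stabilizer H x

/-- `x ∼ y` iff the stabilisers of `x` and `y` in `H` are `H`-conjugate. -/
def stabConjRel {G X : Type*} [Group G] [MulAction G X] (H : Subgroup G) (x y : X) : Prop :=
  ∃ h : H, stabInH H y = Subgroup.map (MulAut.conj h).toMonoidHom (stabInH H x)

/-- If `G` acts faithfully on `X`, `X` is partitioned into the classes `X₁,…,X_t`
of the relation `∼`, and for every `g ∈ G` and every class there is an element of
`G` acting as `g` on the class and trivially outside it, then
`C_G(H) ≅ C₁ × ⋯ × C_t`, where `C_a` is the subgroup of `C_G(H)` fixing the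
complement of `X_a` pointwise. -/
theorem stmt_8 {G X : Type*} [Group G] [MulAction G X] [FaithfulSMul G X]
    (H : Subgroup G) (t : ℕ) (Xa : Fin t → Set X)
    (hpart : ∀ x : X, ∃! a : Fin t, x ∈ Xa a)
    (hclass : ∀ (a : Fin t) (x y : X), x ∈ Xa a → (y ∈ Xa a ↔ stabConjRel H x y))
    (hsplit : ∀ (g : G) (a : Fin t), ∃ ga : G,
      (∀ x ∈ Xa a, ga • x = g • x) ∧ (∀ x ∉ Xa a, ga • x = x)) :
    Nonempty ((Subgroup.centralizer (H : Set G)) ≃*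
      ∀ a : Fin t, (Subgroup.centralizer (H : Set G) ⊓ fixingSub G ((Xa a)ᶜ) :
        Subgroup G)) := by
  classical
  set K := Subgroup.centralizer (H : Set G) with hK
  -- faithfulness
  have faith : ∀ g g' : G, (∀ x : X, g • x = g' • x) → g = g' := by
    intro g g' h
    exact eq_of_smul_eq_smul h
  -- distinct classes are disjoint
  have hdisj : ∀ (a b : Fin t) (x : X), x ∈ Xa a → x ∈ Xa b → a = b := by
    intro a b x ha hb
    obtain ⟨c, -, hc⟩ := hpart x
    rw [hc a ha, hc b hb]
  -- H preserves each class
  have hHpres : ∀ h ∈ H, ∀ (a : Fin t) (x : X), x ∈ Xa a → h • x ∈ Xa a := by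
    intro h hh a x hx
    refine (hclass a x (h • x) hx).mpr ⟨⟨h, hh⟩, ?_⟩
    have h1 : h • x = (⟨h, hh⟩ : H) • x := rfl
    rw [h1]
    exact MulAction.stabilizer_smul_eq_stabilizer_map_conj _ _
  -- the centralizer preserves each class
  have hKpres : ∀ c ∈ K, ∀ (a : Fin t) (x : X), x ∈ Xa a → c • x ∈ Xa a := by
    intro c hc a x hx
    refine (hclass a x (c • x) hx).mpr ⟨1, ?_⟩
    have hstab : stabInH H (c • x) = stabInH H x := by
      ext h
      simp only [stabInH, MulAction.mem_stabilizer_iff, Subgroup.smul_def]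
      have hcomm : (h : G) * c = c * h := Subgroup.mem_centralizer_iff.mp hc h h.2
      constructor
      · intro hh
        have : (c * (h : G)) • x = c • x := by
          rw [← hcomm, mul_smul, hh]
        rw [mul_smul] at this
        exact smul_left_cancel c this
      · intro hh
        calc (h : G) • c • x = ((h : G) * c) • x := (mul_smul _ _ _).symm
          _ = (c * (h : G)) • x := by rw [hcomm]
          _ = c • (h : G) • x := mul_smul _ _ _
          _ = c • x := by rw [hh]
    rw [hstab]
    have h1 : (MulAut.conj (1 : H)).toMonoidHom = MonoidHom.id H := by
      ext y
      simp
    rw [h1, Subgroup.map_id]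
  -- uniqueness of the splitting element
  have huniq : ∀ (g : G) (a : Fin t) (g1 g2 : G),
      ((∀ x ∈ Xa a, g1 • x = g • x) ∧ (∀ x ∉ Xa a, g1 • x = x)) →
      ((∀ x ∈ Xa a, g2 • x = g • x) ∧ (∀ x ∉ Xa a, g2 • x = x)) → g1 = g2 := by
    intro g a g1 g2 h1 h2
    apply faith
    intro x
    by_cases hx : x ∈ Xa a
    · rw [h1.1 x hx, h2.1 x hx]
    · rw [h1.2 x hx, h2.2 x hx]
  -- the chosen splitting element
  set sp : G → Fin t → G := fun g a => (hsplit g a).choose with hsp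
  have hspec : ∀ (g : G) (a : Fin t),
      (∀ x ∈ Xa a, sp g a • x = g • x) ∧ (∀ x ∉ Xa a, sp g a • x = x) :=
    fun g a => (hsplit g a).choose_spec
  -- the splitting element of a centralizing g is centralizing
  have hspK : ∀ g ∈ K, ∀ a : Fin t, sp g a ∈ K := by
    intro g hg a
    rw [Subgroup.mem_centralizer_iff]
    intro h hh
    have key : h * sp g a * h⁻¹ = sp g a := by
      apply faith
      intro x
      by_cases hx : x ∈ Xa a
      · have hx' : h⁻¹ • x ∈ Xa a := hHpres h⁻¹ (H.inv_mem hh) a x hx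
        have hg' : h * g * h⁻¹ = g := by
          rw [Subgroup.mem_centralizer_iff.mp hg h hh, mul_inv_cancel_right]
        calc (h * sp g a * h⁻¹) • x = h • sp g a • h⁻¹ • x := by
              rw [mul_smul, mul_smul]
          _ = h • g • h⁻¹ • x := by rw [(hspec g a).1 _ hx']
          _ = (h * g * h⁻¹) • x := by rw [mul_smul, mul_smul]
          _ = sp g a • x := by rw [hg', (hspec g a).1 x hx]
      · have hx' : h⁻¹ • x ∉ Xa a := by
          intro hc
          exact hx (by simpa using hHpres h hh a _ hc)
        calc (h * sp g a * h⁻¹) • x = h • sp g a • h⁻¹ • x := by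
              rw [mul_smul, mul_smul]
          _ = h • h⁻¹ • x := by rw [(hspec g a).2 _ hx']
          _ = x := by simp
          _ = sp g a • x := ((hspec g a).2 x hx).symm
    calc h * sp g a = (h * sp g a * h⁻¹) * h := (inv_mul_cancel_right _ _).symm
      _ = sp g a * h := by rw [key]
  have hspfix : ∀ (g : G) (a : Fin t), sp g a ∈ fixingSub G ((Xa a)ᶜ) :=
    fun g a x hx => (hspec g a).2 x hx
  -- the forward map
  set F : K → ∀ a : Fin t, (K ⊓ fixingSub G ((Xa a)ᶜ) : Subgroup G) :=
    fun g a => ⟨sp (g : G) a, Subgroup.mem_inf.mpr ⟨hspK g g.2 a, hspfix g a⟩⟩ with hF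
  -- components are in the centralizer / fix the complement
  have hCaK : ∀ (a : Fin t) (c : (K ⊓ fixingSub G ((Xa a)ᶜ) : Subgroup G)),
      (c : G) ∈ K := fun a c => (Subgroup.mem_inf.mp c.2).1
  have hCafix : ∀ (a : Fin t) (c : (K ⊓ fixingSub G ((Xa a)ᶜ) : Subgroup G)),
      ∀ x : X, x ∉ Xa a → (c : G) • x = x :=
    fun a c x hx => (Subgroup.mem_inf.mp c.2).2 x hx
  -- product lemma
  have hprod : ∀ (c : ∀ a : Fin t, (K ⊓ fixingSub G ((Xa a)ᶜ) : Subgroup G))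
      (b : Fin t) (x : X), x ∈ Xa b → ∀ l : List (Fin t), l.Nodup →
      ((l.map fun a => ((c a : G))).prod) • x =
        if b ∈ l then (c b : G) • x else x := by
    intro c b x hx l
    induction l with
    | nil => simp
    | cons a l ih =>
      intro hnd
      have hnd' := List.nodup_cons.mp hnd
      rw [List.map_cons, List.prod_cons, mul_smul, ih hnd'.2]
      by_cases hbl : b ∈ l
      · have hba : b ≠ a := fun h => hnd'.1 (h ▸ hbl)
        rw [if_pos hbl, if_pos (List.mem_cons.mpr (Or.inr hbl))]
        have hcb : (c b : G) • x ∈ Xa b := hKpres _ (hCaK b (c b)) b x hx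
        exact hCafix a (c a) _ (fun hmem => hba (hdisj b a _ hcb hmem))
      · rw [if_neg hbl]
        by_cases hab : b = a
        · subst hab
          rw [if_pos List.mem_cons_self]
        · rw [if_neg (fun hm => hab ((List.mem_cons.mp hm).resolve_right hbl))]
          exact hCafix a (c a) x (fun hmem => hab (hdisj b a x hx hmem))
  -- the inverse map
  have hprodK : ∀ (c : ∀ a : Fin t, (K ⊓ fixingSub G ((Xa a)ᶜ) : Subgroup G)),
      (List.ofFn (fun a => ((c a : G)))).prod ∈ K := by
    intro c
    apply Subgroup.list_prod_mem
    intro y hy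
    obtain ⟨i, rfl⟩ := List.mem_ofFn.mp hy
    exact hCaK i (c i)
  set Fi : (∀ a : Fin t, (K ⊓ fixingSub G ((Xa a)ᶜ) : Subgroup G)) → K :=
    fun c => ⟨(List.ofFn (fun a => ((c a : G)))).prod, hprodK c⟩ with hFi
  have hofFn : ∀ f : Fin t → G, List.ofFn f = (List.finRange t).map f :=
    fun f => (List.ofFn_eq_map (f := f))
  have hprodFn : ∀ (c : ∀ a : Fin t, (K ⊓ fixingSub G ((Xa a)ᶜ) : Subgroup G))
      (b : Fin t) (x : X), x ∈ Xa b →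
      ((List.ofFn (fun a => ((c a : G)))).prod) • x = (c b : G) • x := by
    intro c b x hx
    rw [hofFn]
    rw [hprod c b x hx (List.finRange t) (List.nodup_finRange t)]
    rw [if_pos (List.mem_finRange b)]
  -- left inverse
  have hleft : ∀ g : K, Fi (F g) = g := by
    intro g
    apply Subtype.ext
    apply faith
    intro x
    obtain ⟨b, hb, -⟩ := hpart x
    show ((List.ofFn (fun a => ((F g a : G)))).prod) • x = (g : G) • x
    rw [hprodFn (F g) b x hb]
    exact (hspec (g : G) b).1 x hb
  -- right inverse
  have hright : ∀ c, F (Fi c) = c := by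
    intro c
    funext a
    apply Subtype.ext
    apply huniq ((Fi c : G)) a _ _ (hspec (Fi c : G) a)
    constructor
    · intro x hx
      exact (hprodFn c a x hx).symm
    · intro x hx
      exact hCafix a (c a) x hx
  -- multiplicativity
  have hmul : ∀ g g' : K, F (g * g') = F g * F g' := by
    intro g g'
    funext a
    apply Subtype.ext
    show sp ((g : G) * (g' : G)) a = sp (g : G) a * sp (g' : G) a
    apply huniq ((g : G) * (g' : G)) a _ _ (hspec _ a)
    constructor
    · intro x hx
      have hx' : (g' : G) • x ∈ Xa a := hKpres _ g'.2 a x hx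
      rw [mul_smul, (hspec (g' : G) a).1 x hx, (hspec (g : G) a).1 _ hx',
        mul_smul]
    · intro x hx
      rw [mul_smul, (hspec (g' : G) a).2 x hx, (hspec (g : G) a).2 x hx]
  exact ⟨MulEquiv.mk' ⟨F, Fi, hleft, hright⟩ hmul⟩
end

section
/- Two finite-order elements of Houghton's group H_n are conjugate in H_n if and only if they have the same cycle type (the same number of m-cycles for each m ≥ 2). -/
/-- The set of cycles of length `m` of a permutation `q`: the orbits of the
cyclic group generated by `q` having exactly `m` elements. -/
def cycleSet {S : Type*} (q : Equiv.Perm S) (m : ℕ) : Set (Set S) :=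
  {O : Set S | (∃ s ∈ O, O = {t : S | ∃ k : ℤ, (q ^ k) s = t}) ∧ Nat.card O = m}

open Equiv Equiv.Perm

/-- fixed points are fixed by all integer powers -/
lemma zpow_fix {α : Type*} (q : Equiv.Perm α) {s : α} (h : q s = s) (k : ℤ) :
    (q ^ k) s = s := by
  have hn : ∀ j : ℕ, (q ^ j) s = s := by
    intro j
    induction j with
    | zero => simp
    | succ j ih => rw [pow_succ, Equiv.Perm.mul_apply, h, ih]
  induction k using Int.rec with
  | ofNat j => exact hn j
  | negSucc j =>
    rw [zpow_negSucc]
    have := hn (j + 1)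
    exact (Equiv.symm_apply_eq _).mpr (by simpa using this.symm)

/-- a finite-order eventually-translational permutation is eventually the identity -/
lemma evFix {n : ℕ} {q : Equiv.Perm (ℕ × Fin n)} (hq : EvTrans n ⇑q)
    (ho : IsOfFinOrder q) : ∃ N : ℕ, ∀ s : ℕ × Fin n, N ≤ s.1 → q s = s := by
  obtain ⟨m, z, hz⟩ := hq
  obtain ⟨k, hk0, hk⟩ := ho.exists_pow_eq_one
  have key : ∀ (j : ℕ) (x : Fin n) (i : ℕ), z x + j * (m x).natAbs ≤ i →
      (((q ^ j) (i, x)).1 : ℤ) = (i : ℤ) + j * m x ∧ ((q ^ j) (i, x)).2 = x := by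
    intro j
    induction j with
    | zero => intro x i _; simp
    | succ j ih =>
      intro x i hi
      have hzi : z x ≤ i := by
        have := Nat.le_add_right (z x) ((j+1) * (m x).natAbs); omega
      obtain ⟨h1, h2⟩ := hz x i hzi
      set i' := (q (i, x)).1 with hi'def
      have hq1 : q (i, x) = (i', x) := by
        rw [hi'def]; exact Prod.ext rfl h2
      have hle : z x + j * (m x).natAbs ≤ i' := by
        have habs : -((m x).natAbs : ℤ) ≤ m x ∧ m x ≤ ((m x).natAbs : ℤ) := by
          constructor <;> omega
        have : ((z x : ℤ) + (j+1) * (m x).natAbs) ≤ (i : ℤ) := by exact_mod_cast hi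
        have h1' : (i' : ℤ) = (i : ℤ) + m x := h1
        have : ((z x : ℤ) + j * (m x).natAbs) ≤ (i' : ℤ) := by
          rw [h1']
          have : ((j : ℤ) + 1) * (m x).natAbs = j * (m x).natAbs + (m x).natAbs := by ring
          omega
        exact_mod_cast this
      obtain ⟨ih1, ih2⟩ := ih x i' hle
      rw [pow_succ, Equiv.Perm.mul_apply, hq1]
      constructor
      · rw [ih1, h1]; push_cast; ring
      · exact ih2
  have hm : ∀ x, m x = 0 := by
    intro x
    set i := z x + k * (m x).natAbs with hidef
    obtain ⟨h1, _⟩ := key k x i (le_refl _)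
    rw [hk] at h1
    simp only [Equiv.Perm.one_apply] at h1
    have : (k : ℤ) * m x = 0 := by omega
    have hk0' : (k : ℤ) ≠ 0 := by exact_mod_cast hk0.ne'
    exact (mul_eq_zero.mp this).resolve_left hk0'
  refine ⟨Finset.univ.sup z, ?_⟩
  rintro ⟨i, x⟩ hN
  have hzi : z x ≤ i := le_trans (Finset.le_sup (Finset.mem_univ x)) hN
  obtain ⟨h1, h2⟩ := hz x i hzi
  rw [hm x, add_zero] at h1
  exact Prod.ext (by exact_mod_cast h1) h2

/-- conjugation maps cycles to cycles -/
lemma conj_mem_cycleSet {S : Type*} {q h : Equiv.Perm S} {m : ℕ} {O : Set S}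
    (hO : O ∈ cycleSet q m) : (⇑h '' O) ∈ cycleSet (h * q * h⁻¹) m := by
  obtain ⟨⟨s, hs, hOeq⟩, hcard⟩ := hO
  have happ : ∀ (k : ℤ) (t : S), ((h * q * h⁻¹) ^ k) (h t) = h ((q ^ k) t) := by
    intro k t
    rw [conj_zpow]
    simp [Equiv.Perm.mul_apply]
  constructor
  · refine ⟨h s, Set.mem_image_of_mem _ hs, ?_⟩
    ext t
    constructor
    · rintro ⟨u, hu, rfl⟩
      rw [hOeq] at hu
      obtain ⟨k, hk⟩ := hu
      exact ⟨k, by rw [happ, hk]⟩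
    · rintro ⟨k, hk⟩
      refine ⟨(q ^ k) s, ?_, by rw [← happ, hk]⟩
      rw [hOeq]; exact ⟨k, rfl⟩
  · rw [Nat.card_image_of_injective h.injective]; exact hcard

/-- a permutation preserving the complement of `p` preserves `p` -/
lemma pres {α : Type*} (q : Equiv.Perm α) (p : α → Prop)
    (hfix : ∀ s, ¬ p s → q s = s) : ∀ x, p x ↔ p (q x) := by
  intro x
  constructor
  · intro hx
    by_contra hqx
    have h1 : q (q x) = q x := hfix _ hqx
    have h2 := q.injective h1
    exact hqx (by rw [h2]; exact hx)
  · intro hqx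
    by_contra hx
    rw [hfix _ hx] at hqx
    exact hx hqx

/-- Bridge: number of m-cycles equals multiplicity of m in the cycle type of the restriction -/
lemma bridge {α : Type*} [DecidableEq α] (p : α → Prop) [DecidablePred p]
    [Fintype {x // p x}] (q : Equiv.Perm α) (hfix : ∀ s, ¬ p s → q s = s)
    (hp : ∀ x, p x ↔ p (q x)) {m : ℕ} (hm : 2 ≤ m) :
    Nat.card (cycleSet q m) = Multiset.count m (Equiv.Perm.cycleType (q.subtypePerm (fun x => (hp x).symm))) := by
  set σ := q.subtypePerm (fun x => (hp x).symm) with hσ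
  have hval : ∀ (k : ℤ) (a : {x // p x}), (((σ ^ k) a : {x // p x}) : α) = (q ^ k) (a : α) := by
    intro k a
    rw [hσ, Equiv.Perm.subtypePerm_zpow]
    rfl
  -- claim 1: orbit description
  have claim1 : ∀ a : {x // p x}, Subtype.val '' {b | σ.SameCycle a b}
      = {t | ∃ k : ℤ, (q ^ k) (a : α) = t} := by
    intro a
    ext t
    constructor
    · rintro ⟨b, ⟨k, hk⟩, rfl⟩
      exact ⟨k, by rw [← hval, hk]⟩
    · rintro ⟨k, hk⟩
      exact ⟨(σ ^ k) a, ⟨k, rfl⟩, by rw [hval, hk]⟩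
  -- claim 2: support of the cycleOf
  have claim2 : ∀ a : {x // p x}, a ∈ σ.support →
      ((σ.cycleOf a).support : Set {x // p x}) = {b | σ.SameCycle a b} := by
    intro a ha
    ext b
    simp only [Finset.mem_coe, Equiv.Perm.mem_support_cycleOf_iff, Set.mem_setOf_eq]
    exact and_iff_left ha
  set F := σ.cycleFactorsFinset.filter (fun c => m = c.support.card) with hF
  have cardOc : ∀ c : Equiv.Perm {x // p x},
      Nat.card (Subtype.val '' (c.support : Set {x // p x})) = c.support.card := by
    intro c
    rw [Nat.card_image_of_injective Subtype.val_injective]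
    simp only [Finset.coe_sort_coe]
    exact Nat.card_eq_finsetCard _
  have hbij : ∃ e : {c // c ∈ F} ≃ (cycleSet q m), True := by
    refine ⟨Equiv.ofBijective (fun c => ⟨Subtype.val '' ((c : Equiv.Perm {x // p x}).support : Set {x // p x}), ?_⟩) ⟨?_, ?_⟩, trivial⟩
    · -- membership
      obtain ⟨c, hc⟩ := c
      rw [hF, Finset.mem_filter] at hc
      obtain ⟨hcf, hcm⟩ := hc
      have hcyc : c.IsCycle := (Equiv.Perm.mem_cycleFactorsFinset_iff.mp hcf).1
      obtain ⟨a, ha⟩ := hcyc.nonempty_support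
      have hceq : c = σ.cycleOf a := Equiv.Perm.cycle_is_cycleOf ha hcf
      have haσ : a ∈ σ.support := by
        rw [Equiv.Perm.mem_support]
        have := (Equiv.Perm.mem_cycleFactorsFinset_iff.mp hcf).2 a ha
        rw [← this]
        exact Equiv.Perm.mem_support.mp ha
      have hsupp : c.support = (σ.cycleOf a).support := by rw [hceq]
      constructor
      · refine ⟨(a : α), ⟨a, ha, rfl⟩, ?_⟩
        rw [hsupp, claim2 a haσ, claim1 a]
      · rw [cardOc, hcm]
    · -- injective
      rintro ⟨c, hc⟩ ⟨c', hc'⟩ hcc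
      simp only [Subtype.mk.injEq] at hcc ⊢
      have hsupp : c.support = c'.support := by
        apply Finset.coe_injective
        exact Set.image_injective.mpr Subtype.val_injective hcc
      rw [hF, Finset.mem_filter] at hc hc'
      have hcyc : c.IsCycle := (Equiv.Perm.mem_cycleFactorsFinset_iff.mp hc.1).1
      obtain ⟨a, ha⟩ := hcyc.nonempty_support
      have ha' : a ∈ c'.support := hsupp ▸ ha
      rw [Equiv.Perm.cycle_is_cycleOf ha hc.1, Equiv.Perm.cycle_is_cycleOf ha' hc'.1]
    · -- surjective
      rintro ⟨O, ⟨s, hs, hOeq⟩, hcard⟩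
      have hqs : q s ≠ s := by
        intro hfixs
        have hOs : O = {s} := by
          rw [hOeq]
          ext t
          simp only [Set.mem_setOf_eq, Set.mem_singleton_iff]
          constructor
          · rintro ⟨k, hk⟩; rw [zpow_fix q hfixs k] at hk; exact hk.symm
          · rintro rfl; exact ⟨0, by simp⟩
        rw [hOs] at hcard
        simp at hcard
        omega
      have hps : p s := by
        by_contra hps
        exact hqs (hfix s hps)
      set a : {x // p x} := ⟨s, hps⟩ with hadef
      have haσ : a ∈ σ.support := by
        rw [Equiv.Perm.mem_support]
        intro hcon
        apply hqs
        have := congrArg Subtype.val hcon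
        exact this
      set c := σ.cycleOf a with hcdef
      have hcf : c ∈ σ.cycleFactorsFinset :=
        Equiv.Perm.cycleOf_mem_cycleFactorsFinset_iff.mpr haσ
      have hOc : Subtype.val '' ((c.support : Set {x // p x})) = O := by
        have hsupp : c.support = (σ.cycleOf a).support := by rw [hcdef]
        rw [hsupp, claim2 a haσ, claim1 a, hOeq]
      have hcm : m = c.support.card := by
        rw [← cardOc c, hOc, hcard]
      refine ⟨⟨c, ?_⟩, ?_⟩
      · rw [hF, Finset.mem_filter]; exact ⟨hcf, hcm⟩
      · exact Subtype.ext hOc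
  obtain ⟨e, -⟩ := hbij
  rw [← Nat.card_congr e]
  rw [Nat.card_eq_finsetCard F]
  rw [Equiv.Perm.cycleType_def, Multiset.count_map]
  rfl

/-- Two finite-order elements of Houghton's group are conjugate in `H_n` if and
only if they have the same cycle type (the same number of `m`-cycles for each
`m ≥ 2`). -/
theorem stmt_14 (n : ℕ) (q₁ q₂ : Equiv.Perm (ℕ × Fin n))
    (hq₁ : EvTrans n ⇑q₁) (hq₂ : EvTrans n ⇑q₂)
    (ho₁ : IsOfFinOrder q₁) (ho₂ : IsOfFinOrder q₂) :
    (∃ h : Equiv.Perm (ℕ × Fin n), EvTrans n ⇑h ∧ h * q₁ * h⁻¹ = q₂) ↔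
      ∀ m : ℕ, 2 ≤ m → Nat.card (cycleSet q₁ m) = Nat.card (cycleSet q₂ m) := by
  constructor
  · -- forward
    rintro ⟨h, -, hconj⟩ m _
    have hconj' : h⁻¹ * q₂ * h⁻¹⁻¹ = q₁ := by
      rw [← hconj]; group
    have e : cycleSet q₁ m ≃ cycleSet q₂ m := by
      refine ⟨fun O => ⟨⇑h '' O.1, by rw [← hconj]; exact conj_mem_cycleSet O.2⟩,
        fun O => ⟨⇑h⁻¹ '' O.1, by rw [← hconj']; exact conj_mem_cycleSet O.2⟩, ?_, ?_⟩
      · rintro ⟨O, hO⟩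
        apply Subtype.ext
        simp only [Set.image_image]
        ext t; simp
      · rintro ⟨O, hO⟩
        apply Subtype.ext
        simp only [Set.image_image]
        ext t; simp
    exact Nat.card_congr e
  · -- backward
    intro hcount
    obtain ⟨N₁, hN₁⟩ := evFix hq₁ ho₁
    obtain ⟨N₂, hN₂⟩ := evFix hq₂ ho₂
    set N := max N₁ N₂ with hNdef
    set p : ℕ × Fin n → Prop := fun s => s.1 < N with hpdef
    haveI : DecidablePred p := fun s => Nat.decLt _ _
    haveI : Fintype {x // p x} := by
      apply Fintype.ofFinset ((Finset.range N) ×ˢ (Finset.univ : Finset (Fin n)))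
      intro x
      simp only [Finset.mem_product, Finset.mem_range, Finset.mem_univ, and_true]
      exact Iff.rfl
    have hfix₁ : ∀ s, ¬ p s → q₁ s = s := by
      intro s hs
      simp only [hpdef, not_lt] at hs
      exact hN₁ s (le_trans (le_max_left _ _) hs)
    have hfix₂ : ∀ s, ¬ p s → q₂ s = s := by
      intro s hs
      simp only [hpdef, not_lt] at hs
      exact hN₂ s (le_trans (le_max_right _ _) hs)
    have hp₁ := pres q₁ p hfix₁
    have hp₂ := pres q₂ p hfix₂
    set σ₁ := q₁.subtypePerm (fun x => (hp₁ x).symm) with hσ₁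
    set σ₂ := q₂.subtypePerm (fun x => (hp₂ x).symm) with hσ₂
    have hct : σ₁.cycleType = σ₂.cycleType := by
      ext m
      by_cases hm : 2 ≤ m
      · rw [← bridge p q₁ hfix₁ hp₁ hm, ← bridge p q₂ hfix₂ hp₂ hm]
        exact hcount m hm
      · rw [Multiset.count_eq_zero.mpr, Multiset.count_eq_zero.mpr]
        · intro hmem; exact hm (Equiv.Perm.two_le_of_mem_cycleType hmem)
        · intro hmem; exact hm (Equiv.Perm.two_le_of_mem_cycleType hmem)
    have hic : IsConj σ₁ σ₂ := Equiv.Perm.isConj_iff_cycleType_eq.mpr hct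
    obtain ⟨π, hπ⟩ := isConj_iff.mp hic
    refine ⟨Equiv.Perm.ofSubtype π, ?_, ?_⟩
    · refine ⟨0, fun _ => N, fun x i hi => ?_⟩
      have hnp : ¬ p (i, x) := not_lt.mpr hi
      rw [Equiv.Perm.ofSubtype_apply_of_not_mem _ hnp]
      simp
    · have h₂₁ : ∀ x, q₁ x ≠ x → p x := fun x hx => by
        by_contra hc; exact hx (hfix₁ x hc)
      have h₂₂ : ∀ x, q₂ x ≠ x → p x := fun x hx => by
        by_contra hc; exact hx (hfix₂ x hc)
      have hq1 : Equiv.Perm.ofSubtype σ₁ = q₁ := Equiv.Perm.ofSubtype_subtypePerm (fun x => (hp₁ x).symm) h₂₁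
      have hq2 : Equiv.Perm.ofSubtype σ₂ = q₂ := Equiv.Perm.ofSubtype_subtypePerm (fun x => (hp₂ x).symm) h₂₂
      rw [← hq1, ← hq2, ← map_inv, ← map_mul, ← map_mul, hπ]
end

section
/- Houghton's group H_n (for n ≥ 2) has infinitely many conjugacy classes of subgroups isomorphic to ℤ/2ℤ; in particular H_n is not quasi-FP̲₀. -/
/-- flip pairs 2k ↔ 2k+1 -/
def flipNat (m : ℕ) : ℕ := if m % 2 = 0 then m + 1 else m - 1

lemma flipNat_flipNat (m : ℕ) : flipNat (flipNat m) = m := by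
  unfold flipNat; split_ifs <;> omega

lemma flipNat_ne (m : ℕ) : flipNat m ≠ m := by
  unfold flipNat; split_ifs <;> omega

lemma flipNat_lt {m N : ℕ} (h : m < 2 * N) : flipNat m < 2 * N := by
  unfold flipNat; split_ifs <;> omega

/-- the underlying function of q i -/
def fQ (n : ℕ) (z : Fin n) (i : ℕ) (p : ℕ × Fin n) : ℕ × Fin n :=
  if p.2 = z ∧ p.1 < 2 * (i + 1) then (flipNat p.1, z) else p

lemma fQ_inv (n : ℕ) (z : Fin n) (i : ℕ) : Function.Involutive (fQ n z i) := by
  intro p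
  unfold fQ
  by_cases h : p.2 = z ∧ p.1 < 2 * (i + 1)
  · rw [if_pos h]
    rw [if_pos ⟨rfl, flipNat_lt h.2⟩, flipNat_flipNat]
    exact Prod.ext rfl h.1.symm
  · rw [if_neg h, if_neg h]

lemma fQ_moved (n : ℕ) (z : Fin n) (i : ℕ) :
    {p : ℕ × Fin n | fQ n z i p ≠ p} = (fun m => (m, z)) '' Set.Iio (2 * (i + 1)) := by
  ext p
  simp only [Set.mem_setOf_eq, Set.mem_image, Set.mem_Iio]
  constructor
  · intro hp
    unfold fQ at hp
    by_cases h : p.2 = z ∧ p.1 < 2 * (i + 1)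
    · exact ⟨p.1, h.2, by rw [← h.1]⟩
    · exact absurd (if_neg h) hp
  · rintro ⟨m, hm, rfl⟩
    unfold fQ
    rw [if_pos ⟨rfl, hm⟩]
    intro hc
    exact flipNat_ne m (congrArg Prod.fst hc)

lemma fQ_moved_ncard (n : ℕ) (z : Fin n) (i : ℕ) :
    {p : ℕ × Fin n | fQ n z i p ≠ p}.ncard = 2 * (i + 1) := by
  rw [fQ_moved]
  rw [Set.ncard_image_of_injective _ (fun a b hab => (Prod.mk.injEq _ _ _ _ ▸ hab).1)]
  rw [← Finset.coe_range, Set.ncard_coe_finset, Finset.card_range]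

/-- Houghton's group `H_n` (n ≥ 2) contains an infinite family of order-two
elements generating pairwise non-conjugate subgroups isomorphic to `ℤ/2ℤ`;
in particular `H_n` is not quasi-FP̲₀. -/
theorem stmt_16 (n : ℕ) (hn : 2 ≤ n) :
    ∃ q : ℕ → Equiv.Perm (ℕ × Fin n),
      (∀ i, EvTrans n ⇑(q i)) ∧
      (∀ i, orderOf (q i) = 2) ∧
      (∀ i j : ℕ, i ≠ j →
        ¬ ∃ h : Equiv.Perm (ℕ × Fin n), EvTrans n ⇑h ∧
          Subgroup.map (MulAut.conj h).toMonoidHom (Subgroup.zpowers (q i)) =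
            Subgroup.zpowers (q j)) := by
  have hz : 0 < n := by omega
  set z : Fin n := ⟨0, hz⟩ with hzdef
  refine ⟨fun i => Function.Involutive.toPerm _ (fQ_inv n z i), ?_, ?_, ?_⟩
  · -- eventually translation by 0
    intro i
    refine ⟨0, fun _ => 2 * (i + 1), fun x j hj => ?_⟩
    have hj' : 2 * (i + 1) ≤ j := hj
    have : fQ n z i (j, x) = (j, x) := by
      unfold fQ
      rw [if_neg (by push_neg; intro _; omega)]
    simp [Function.Involutive.toPerm, this]
  · -- order 2
    intro i
    have hne : (Function.Involutive.toPerm _ (fQ_inv n z i)) ≠ 1 := by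
      intro hc
      have := congrArg (fun e => (e : Equiv.Perm (ℕ × Fin n)) (0, z)) hc
      simp only [Function.Involutive.toPerm, Equiv.coe_fn_mk, Equiv.Perm.coe_one, id_eq] at this
      have h0 : fQ n z i (0, z) = (flipNat 0, z) := by
        unfold fQ; rw [if_pos ⟨rfl, by omega⟩]
      rw [h0] at this
      exact absurd (congrArg Prod.fst this) (flipNat_ne 0)
    refine orderOf_eq_prime ?_ hne
    refine Equiv.ext fun p => ?_
    simp only [sq, Equiv.Perm.mul_apply, Equiv.Perm.coe_one, id_eq,
      Function.Involutive.coe_toPerm]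
    exact fQ_inv n z i p
  · -- non-conjugacy
    intro i j hij ⟨h, _, hmap⟩
    set qi := Function.Involutive.toPerm _ (fQ_inv n z i) with hqi
    set qj := Function.Involutive.toPerm _ (fQ_inv n z j) with hqj
    have hqine : qi ≠ 1 := by
      intro hc
      have := congrArg (fun e => (e : Equiv.Perm (ℕ × Fin n)) (0, z)) hc
      simp only [hqi, Function.Involutive.toPerm, Equiv.coe_fn_mk, Equiv.Perm.coe_one, id_eq] at this
      have h0 : fQ n z i (0, z) = (flipNat 0, z) := by
        unfold fQ; rw [if_pos ⟨rfl, by omega⟩]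
      rw [h0] at this
      exact absurd (congrArg Prod.fst this) (flipNat_ne 0)
    have hqjsq : qj ^ 2 = 1 := by
      refine Equiv.ext fun p => ?_
      simp only [hqj, sq, Equiv.Perm.mul_apply, Equiv.Perm.coe_one, id_eq,
        Function.Involutive.coe_toPerm]
      exact fQ_inv n z j p
    -- conj h qi ∈ zpowers qj
    have hmem : (MulAut.conj h) qi ∈ Subgroup.zpowers qj := by
      rw [← hmap]
      exact ⟨qi, Subgroup.mem_zpowers qi, rfl⟩
    obtain ⟨k, hk0⟩ := hmem
    have hk : qj ^ k = (MulAut.conj h) qi := hk0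
    have hk2 : qj ^ k = qj ^ (k % 2) := by
      conv_lhs => rw [← Int.emod_add_mul_ediv k 2]
      rw [zpow_add, zpow_mul, show ((2 : ℤ)) = ((2 : ℕ) : ℤ) from rfl, zpow_natCast,
        hqjsq, one_zpow, mul_one]
    have hconj : (MulAut.conj h) qi = qj := by
      rcases (by omega : k % 2 = 0 ∨ k % 2 = 1) with h0 | h1
      · exfalso
        rw [hk2, h0, zpow_zero] at hk
        exact hqine ((MulAut.conj h).injective
          (show (MulAut.conj h) qi = (MulAut.conj h) 1 by rw [← hk, map_one]))
      · rw [← hk, hk2, h1, zpow_one]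
    -- moved sets
    have hset : {p : ℕ × Fin n | fQ n z j p ≠ p} = ⇑h '' {p : ℕ × Fin n | fQ n z i p ≠ p} := by
      ext p
      have hap : qj p = h (qi (h⁻¹ p)) := by
        rw [← hconj]; simp [Equiv.Perm.mul_apply]
      constructor
      · intro hp
        refine ⟨h⁻¹ p, ?_, by simp⟩
        simp only [Set.mem_setOf_eq] at hp ⊢
        intro hc
        apply hp
        have : (qj : Equiv.Perm (ℕ × Fin n)) p = p := by
          rw [hap]
          show h (qi (h⁻¹ p)) = p
          have : (qi : Equiv.Perm (ℕ × Fin n)) (h⁻¹ p) = h⁻¹ p := hc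
          rw [this]; simp
        exact this
      · rintro ⟨x, hx, rfl⟩
        simp only [Set.mem_setOf_eq] at hx ⊢
        intro hc
        apply hx
        have : (qj : Equiv.Perm (ℕ × Fin n)) (h x) = h x := hc
        rw [hap] at this
        simp only [Equiv.Perm.inv_def, Equiv.symm_apply_apply] at this
        have := h.injective this
        exact this
    have hcard := congrArg Set.ncard hset
    rw [Set.ncard_image_of_injective _ h.injective, fQ_moved_ncard, fQ_moved_ncard] at hcard
    omega
end

section
/- Every infinite virtually cyclic subgroup Q of Houghton's group H_n is finite-by-ℤ, i.e., Q has a finite normal subgroup F with Q/F ≅ ℤ; equivalently, no infinite virtually cyclic subgroup of H_n is finite-by-D_∞. -/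
/-- The eventual translation vector is unique. -/
lemma evtransw_unique {n : ℕ} {h : ℕ × Fin n → ℕ × Fin n} {m m' : Fin n → ℤ}
    (h1 : EvTransW n h m) (h2 : EvTransW n h m') : m = m' := by
  obtain ⟨z, hz⟩ := h1
  obtain ⟨z', hz'⟩ := h2
  funext x
  have a := (hz x (max (z x) (z' x)) (le_max_left _ _)).1
  have b := (hz' x (max (z x) (z' x)) (le_max_right _ _)).1
  omega

/-- Eventual translation vectors add under composition. -/
lemma evtransw_comp {n : ℕ} {h g : ℕ × Fin n → ℕ × Fin n} {mh mg : Fin n → ℤ}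
    (h1 : EvTransW n h mh) (h2 : EvTransW n g mg) :
    EvTransW n (h ∘ g) (mh + mg) := by
  obtain ⟨zh, hzh⟩ := h1
  obtain ⟨zg, hzg⟩ := h2
  refine ⟨fun x => max (zg x) (zh x + (mg x).natAbs), fun x i hi => ?_⟩
  have hi1 : zg x ≤ i := le_trans (le_max_left _ _) hi
  have hi2 : zh x + (mg x).natAbs ≤ i := le_trans (le_max_right _ _) hi
  obtain ⟨ha, hb⟩ := hzg x i hi1
  have hpeq : g (i, x) = ((g (i, x)).1, x) := Prod.ext rfl hb
  have hj : zh x ≤ (g (i, x)).1 := by omega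
  obtain ⟨hc, hd⟩ := hzh x (g (i, x)).1 hj
  rw [Function.comp_apply, hpeq]
  refine ⟨?_, hd⟩
  rw [hc, ha]
  simp [add_assoc, add_comm (mh x) (mg x)]

/-- A permutation which fixes all points outside a finite set has finite order. -/
lemma isOfFinOrder_of_finite_support {α : Type*} (q : Equiv.Perm α)
    (h : {p | q p ≠ p}.Finite) : IsOfFinOrder q := by
  classical
  have hP : ∀ p : α, q p ≠ p ↔ q (q p) ≠ q p := by
    intro p
    constructor
    · intro hp hc
      exact hp (q.injective hc)
    · intro hp hc
      apply hp
      rw [hc]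
      exact hc
  haveI : Finite {p : α // q p ≠ p} := h
  set σ : Equiv.Perm {p : α // q p ≠ p} := q.subtypePerm (fun p => (hP p).symm) with hσ
  obtain ⟨k, hk, hσk⟩ := isOfFinOrder_iff_pow_eq_one.mp (isOfFinOrder_of_finite σ)
  refine isOfFinOrder_iff_pow_eq_one.mpr ⟨k, hk, ?_⟩
  ext p
  by_cases hp : q p ≠ p
  · have h1 := Equiv.ext_iff.mp hσk ⟨p, hp⟩
    rw [hσ, Equiv.Perm.subtypePerm_pow] at h1
    simpa using congrArg Subtype.val h1
  · push_neg at hp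
    show (q ^ k) p = p
    clear hσk hk
    induction k with
    | zero => simp
    | succ k ih => rw [pow_succ, Equiv.Perm.mul_apply, hp, ih]

/-- Every infinite virtually cyclic subgroup `Q` of Houghton's group `H_n` is
finite-by-`ℤ`: there is a surjection `Q → ℤ` with finite kernel, i.e. a finite
normal subgroup `F ⊴ Q` with `Q/F ≅ ℤ`. -/
theorem stmt_17 (n : ℕ) (Q : Subgroup (Equiv.Perm (ℕ × Fin n)))
    (hQ : ∀ q ∈ Q, EvTrans n ⇑q) (hinf : Infinite Q)
    (hvc : ∃ C : Subgroup Q, IsCyclic C ∧ C.FiniteIndex) :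
    ∃ φ : Q →* Multiplicative ℤ, Function.Surjective φ ∧ Finite φ.ker := by
  classical
  obtain ⟨C, hC, hCfi⟩ := hvc
  haveI := hCfi
  -- the translation-vector map
  set τ : Q → (Fin n → ℤ) := fun q => (hQ q q.2).choose with hτdef
  have hspec : ∀ q : Q, EvTransW n ⇑(q : Equiv.Perm (ℕ × Fin n)) (τ q) :=
    fun q => (hQ q q.2).choose_spec
  have hmul : ∀ q r : Q, τ (q * r) = τ q + τ r := by
    intro q r
    refine evtransw_unique (hspec (q * r)) ?_
    have hco : ⇑((q * r : Q) : Equiv.Perm (ℕ × Fin n)) =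
        ⇑(q : Equiv.Perm (ℕ × Fin n)) ∘ ⇑(r : Equiv.Perm (ℕ × Fin n)) := rfl
    rw [hco]
    exact evtransw_comp (hspec q) (hspec r)
  have hone : τ 1 = 0 := by
    refine evtransw_unique (hspec 1) ?_
    exact ⟨fun _ => 0, fun x i _ => by simp⟩
  -- bundle as a monoid hom into `Multiplicative (Fin n → ℤ)`
  let T : Q →* Multiplicative (Fin n → ℤ) :=
    MonoidHom.mk' (fun q => Multiplicative.ofAdd (τ q)) (fun a b => by
      show Multiplicative.ofAdd (τ (a * b)) = Multiplicative.ofAdd (τ a) * Multiplicative.ofAdd (τ b)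
      rw [hmul]
      rfl)
  have hzpow : ∀ (q : Q) (t : ℤ), τ (q ^ t) = t • τ q := by
    intro q t
    have h := congrArg Multiplicative.toAdd (map_zpow T q t)
    simpa [T] using h
  -- elements with zero translation vector have finite order
  have htors : ∀ q : Q, τ q = 0 → IsOfFinOrder q := by
    intro q h0
    obtain ⟨z, hz⟩ := hspec q
    rw [h0] at hz
    have hfix : ∀ p : ℕ × Fin n, z p.2 ≤ p.1 → (q : Equiv.Perm (ℕ × Fin n)) p = p := by
      intro p hp
      obtain ⟨a, b⟩ := hz p.2 p.1 hp
      have ha : (((q : Equiv.Perm (ℕ × Fin n)) (p.1, p.2)).1 : ℤ) = (p.1 : ℤ) := by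
        simpa using a
      have ha' : ((q : Equiv.Perm (ℕ × Fin n)) (p.1, p.2)).1 = p.1 := by exact_mod_cast ha
      have : (q : Equiv.Perm (ℕ × Fin n)) (p.1, p.2) = (p.1, p.2) := Prod.ext ha' b
      simpa using this
    have hfin : {p : ℕ × Fin n | (q : Equiv.Perm (ℕ × Fin n)) p ≠ p}.Finite := by
      refine Set.Finite.subset ((Set.finite_Iio (Finset.univ.sup z)).prod
        (Set.finite_univ (α := Fin n))) ?_
      intro p hp
      rcases lt_or_ge p.1 (z p.2) with h | h
      · exact ⟨lt_of_lt_of_le h (Finset.le_sup (Finset.mem_univ p.2)), Set.mem_univ _⟩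
      · exact absurd (hfix p h) hp
    have hfin' : IsOfFinOrder (q : Equiv.Perm (ℕ × Fin n)) :=
      isOfFinOrder_of_finite_support _ hfin
    obtain ⟨k, hk, hqk⟩ := isOfFinOrder_iff_pow_eq_one.mp hfin'
    refine isOfFinOrder_iff_pow_eq_one.mpr ⟨k, hk, ?_⟩
    ext1
    push_cast
    exact hqk
  -- C must be infinite
  haveI hCinf : Infinite C := by
    rw [← not_finite_iff_infinite]
    intro hCfin
    haveI h1 : Finite (Q ⧸ C) := (Nat.card_ne_zero.mp hCfi.index_ne_zero).2
    haveI : Finite Q :=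
      Finite.of_equiv _ (Subgroup.groupEquivQuotientProdSubgroup (s := C)).symm
    exact not_finite Q
  obtain ⟨g, hg⟩ := hC.exists_generator
  -- the generator has nonzero translation vector
  have hvne : τ (↑g : Q) ≠ 0 := by
    intro h0
    have hfo : IsOfFinOrder (↑g : Q) := htors _ h0
    have hfog : IsOfFinOrder g := by
      obtain ⟨k, hk, hgk⟩ := isOfFinOrder_iff_pow_eq_one.mp hfo
      refine isOfFinOrder_iff_pow_eq_one.mpr ⟨k, hk, ?_⟩
      ext1
      push_cast
      exact_mod_cast hgk
    have hfinz : (Subgroup.zpowers g : Set C).Finite := hfog.finite_zpowers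
    have htop : Subgroup.zpowers g = ⊤ := by
      rw [Subgroup.eq_top_iff']
      exact hg
    rw [htop] at hfinz
    have : Finite C := Set.finite_univ_iff.mp (by simpa using hfinz)
    exact not_finite C
  obtain ⟨x₀, hx₀⟩ := Function.ne_iff.mp hvne
  rw [Pi.zero_apply] at hx₀
  -- the range of evaluation at x₀ is a subgroup of ℤ
  have hinv : ∀ q : Q, τ q⁻¹ = -τ q := by
    intro q
    have h := hmul q⁻¹ q
    rw [inv_mul_cancel, hone] at h
    exact eq_neg_of_add_eq_zero_left h.symm
  let R : AddSubgroup ℤ :=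
    { carrier := Set.range fun q : Q => τ q x₀
      zero_mem' := ⟨1, by show τ (1 : Q) x₀ = 0; rw [hone]; rfl⟩
      add_mem' := by
        rintro a b ⟨qa, rfl⟩ ⟨qb, rfl⟩
        exact ⟨qa * qb, by show τ (qa * qb) x₀ = _; rw [hmul]; rfl⟩
      neg_mem' := by
        rintro a ⟨qa, rfl⟩
        exact ⟨qa⁻¹, by show τ qa⁻¹ x₀ = _; rw [hinv]; rfl⟩ }
  obtain ⟨m, hm⟩ := Int.subgroup_cyclic R
  have hmemR : ∀ q : Q, τ q x₀ ∈ R := fun q => ⟨q, rfl⟩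
  have hdvd : ∀ q : Q, m ∣ τ q x₀ := by
    intro q
    have h := hmemR q
    rw [hm] at h
    obtain ⟨t, ht⟩ := AddSubgroup.mem_closure_singleton.mp h
    rw [smul_eq_mul] at ht
    exact ⟨t, by rw [← ht, mul_comm]⟩
  have hm0 : m ≠ 0 := by
    intro h0
    obtain ⟨t, ht⟩ := hdvd (↑g : Q)
    rw [h0, zero_mul] at ht
    exact hx₀ ht
  -- the homomorphism
  let φ : Q →* Multiplicative ℤ :=
    MonoidHom.mk' (fun q => Multiplicative.ofAdd (τ q x₀ / m)) (by
      intro a b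
      obtain ⟨ta, hta⟩ := hdvd a
      obtain ⟨tb, htb⟩ := hdvd b
      have hab : τ (a * b) x₀ = τ a x₀ + τ b x₀ := by rw [hmul]; rfl
      show Multiplicative.ofAdd (τ (a * b) x₀ / m) =
        Multiplicative.ofAdd (τ a x₀ / m) * Multiplicative.ofAdd (τ b x₀ / m)
      rw [← ofAdd_add]
      congr 1
      rw [hab, hta, htb, ← mul_add, Int.mul_ediv_cancel_left _ hm0,
        Int.mul_ediv_cancel_left _ hm0, Int.mul_ediv_cancel_left _ hm0])
  refine ⟨φ, ?_, ?_⟩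
  · -- surjectivity
    have hmR : m ∈ R := by
      rw [hm]
      exact AddSubgroup.mem_closure_singleton.mpr ⟨1, one_smul _ _⟩
    obtain ⟨q₀, hq₀'⟩ := hmR
    have hq₀ : τ q₀ x₀ = m := hq₀'
    intro k
    refine ⟨q₀ ^ (Multiplicative.toAdd k), ?_⟩
    show Multiplicative.ofAdd (τ (q₀ ^ (Multiplicative.toAdd k)) x₀ / m) = k
    rw [hzpow]
    have : (Multiplicative.toAdd k • τ q₀) x₀ = Multiplicative.toAdd k * m := by
      rw [Pi.smul_apply, hq₀, smul_eq_mul]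
    rw [this, Int.mul_ediv_cancel _ hm0, ofAdd_toAdd]
  · -- finiteness of the kernel
    have hker0 : ∀ q : Q, q ∈ φ.ker → τ q x₀ = 0 := by
      intro q hq
      have h1 : φ q = 1 := hq
      have h2 : τ q x₀ / m = 0 := by
        have h3 := congrArg Multiplicative.toAdd h1
        simpa [φ] using h3
      obtain ⟨t, ht⟩ := hdvd q
      rw [ht, Int.mul_ediv_cancel_left _ hm0] at h2
      rw [ht, h2, mul_zero]
    have hbot : C.subgroupOf φ.ker = ⊥ := by
      rw [Subgroup.eq_bot_iff_forall]
      intro x hx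
      have hxC : (↑x : Q) ∈ C := Subgroup.mem_subgroupOf.mp hx
      obtain ⟨t, ht⟩ := Subgroup.mem_zpowers_iff.mp (hg ⟨↑x, hxC⟩)
      have hxq : (↑x : Q) = (↑g : Q) ^ t := by
        have := congrArg (Subtype.val : C → Q) ht
        push_cast at this
        exact this.symm
      have hτx : τ (↑x : Q) x₀ = t * τ (↑g : Q) x₀ := by
        rw [hxq, hzpow]
        simp
      have h0 : τ (↑x : Q) x₀ = 0 := hker0 _ x.2
      have ht0 : t = 0 := by
        rcases mul_eq_zero.mp (hτx ▸ h0) with h | h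
        · exact h
        · exact absurd h hx₀
      have : (↑x : Q) = 1 := by rw [hxq, ht0, zpow_zero]
      exact Subtype.ext this
    haveI : (C.subgroupOf φ.ker).FiniteIndex :=
      Subgroup.instFiniteIndex_subgroupOf C φ.ker
    have hne : ((⊥ : Subgroup φ.ker)).index ≠ 0 := by
      rw [← hbot]
      exact Subgroup.FiniteIndex.index_ne_zero
    rw [Subgroup.index_bot] at hne
    exact (Nat.card_ne_zero.mp hne).2
end
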